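/- Let I be a nonempty finite set with a linear preorder ≤_I. Define Rep(I, Bℝ⁺) to be the set of functions α: {(i,j) : i ≤_I j} → ℝ⁺ (where ℝ⁺ = ℝ ∪ {∞}) satisfying α(i,i) = 0 and α(i,j) + α(j,k) = α(i,k) whenever i ≤_I j ≤_I k. If I = {i₀, i₁, ..., iₙ} with i₀ ≤_I i₁ ≤_I ⋯ ≤_I iₙ an enumeration, then the map α ↦ (α(i₀,i₁), α(i₁,i₂), ..., α(i_{n-1}, iₙ)) is an injection of Rep(I, Bℝ⁺) into (ℝ⁺)ⁿ, whose image consists of those tuples (t₁,...,tₙ) such that t_m < ∞ whenever i_m ≤_I i_{m-1}. -/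

import Mathlib

def RepD {I : Type} (r : I → I → Prop) : Set (∀ i j : I, r i j → EReal) :=
  {α | (∀ i j (h : r i j), α i j h ≠ ⊥) ∧ (∀ i (h : r i i), α i i h = 0) ∧
    ∀ i j k (hij : r i j) (hjk : r j k) (hik : r i k),
      α i j hij + α j k hjk = α i k hik}

private lemma ereal_sum_ne_bot {s : Finset ℕ} {f : ℕ → EReal} (h : ∀ m ∈ s, f m ≠ ⊥) :
    ∑ m ∈ s, f m ≠ ⊥ := by
  classical
  induction s using Finset.cons_induction with
  | empty => simp
  | cons a s ha ih =>
    rw [Finset.sum_cons, Ne, EReal.add_eq_bot_iff]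
    push_neg
    exact ⟨h a (by simp), ih fun m hm => h m (by simp [hm])⟩

private lemma ereal_sum_real {s : Finset ℕ} {f : ℕ → EReal} (h : ∀ m ∈ s, ∃ x : ℝ, f m = x) :
    ∃ x : ℝ, ∑ m ∈ s, f m = x := by
  classical
  induction s using Finset.cons_induction with
  | empty => exact ⟨0, by simp⟩
  | cons a s ha ih =>
    obtain ⟨x, hx⟩ := h a (by simp)
    obtain ⟨y, hy⟩ := ih fun m hm => h m (by simp [hm])
    exact ⟨x + y, by rw [Finset.sum_cons, hx, hy, EReal.coe_add]⟩

private lemma ereal_zero_sum {x y : EReal} (hx : x ≠ ⊥) (hy : y ≠ ⊥) (h : x + y = 0) :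
    ∃ a b : ℝ, x = a ∧ y = b ∧ a + b = 0 := by
  induction x using EReal.rec with
  | bot => exact absurd rfl hx
  | top => rw [EReal.top_add_of_ne_bot hy] at h; exact absurd h (by simp)
  | coe a =>
    induction y using EReal.rec with
    | bot => exact absurd rfl hy
    | top => rw [EReal.add_top_of_ne_bot hx] at h; exact absurd h (by simp)
    | coe b =>
      refine ⟨a, b, rfl, rfl, ?_⟩
      exact_mod_cast h

private lemma ereal_add_coe_neg (x : EReal) (y : ℝ) : x + y + -(y : EReal) = x := by
  induction x using EReal.rec with
  | bot => simp [EReal.bot_add]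
  | top => rw [EReal.top_add_coe, EReal.top_add_of_ne_bot (by simp [EReal.neg_eq_bot_iff])]
  | coe a => norm_cast; ring

private lemma ereal_neg_coe_add (x : EReal) (y : ℝ) : -(y : EReal) + ((y : EReal) + x) = x := by
  induction x using EReal.rec with
  | bot => simp [EReal.add_bot, EReal.bot_add]
  | top => rw [EReal.coe_add_top, EReal.add_top_of_ne_bot (by simp [EReal.neg_eq_bot_iff])]
  | coe a => norm_cast; ring

private lemma ereal_real_add_eq_real {x y : ℝ} {z : EReal} (hz : z ≠ ⊥)
    (h : (x : EReal) + z = (y : EReal)) : z = ((y - x : ℝ) : EReal) := by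
  induction z using EReal.rec with
  | bot => exact absurd rfl hz
  | top => rw [EReal.coe_add_top] at h; exact absurd h.symm (EReal.coe_ne_top y)
  | coe a =>
    norm_cast at h ⊢
    linarith

private noncomputable def Tfun (n : ℕ) (t : Fin n → EReal) (m : ℕ) : EReal :=
  if hm : m < n then t ⟨m, hm⟩ else 0

private noncomputable def Ffun (n : ℕ) (t : Fin n → EReal) (a b : ℕ) : EReal :=
  ∑ m ∈ Finset.Ico a b, Tfun n t m

private lemma Tfun_ne_bot {n : ℕ} {t : Fin n → EReal} (hbot : ∀ m, t m ≠ ⊥) (m : ℕ) :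
    Tfun n t m ≠ ⊥ := by
  unfold Tfun
  split
  · exact hbot _
  · simp

private lemma Ffun_ne_bot {n : ℕ} {t : Fin n → EReal} (hbot : ∀ m, t m ≠ ⊥) (a b : ℕ) :
    Ffun n t a b ≠ ⊥ :=
  ereal_sum_ne_bot fun m _ => Tfun_ne_bot hbot m

private lemma Ffun_consec {n : ℕ} (t : Fin n → EReal) {a b c : ℕ} (hab : a ≤ b) (hbc : b ≤ c) :
    Ffun n t a b + Ffun n t b c = Ffun n t a c :=
  Finset.sum_Ico_consecutive _ hab hbc

/-- The chain lemma: on a RepD element, values along the chain are sums of steps. -/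
private lemma chain_lemma {I : Type} {r : I → I → Prop} {n : ℕ} {e : Fin (n + 1) → I}
    (hmono : ∀ m m' : Fin (n + 1), m ≤ m' → r (e m) (e m'))
    {α : ∀ i j : I, r i j → EReal} (hα : α ∈ RepD r) :
    ∀ (c : ℕ) (hc : c ≤ n) (a : Fin (n + 1)) (_ : (a : ℕ) ≤ c)
      (h : r (e a) (e ⟨c, Nat.lt_succ_of_le hc⟩)),
      α (e a) (e ⟨c, Nat.lt_succ_of_le hc⟩) h
        = Ffun n (fun m => α (e m.castSucc) (e m.succ) (hmono _ _ (Fin.castSucc_lt_succ (i := m)).le))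
            (a : ℕ) c := by
  intro c
  induction c with
  | zero =>
    intro hc a ha h
    have haz : a = ⟨0, Nat.succ_pos n⟩ := Fin.ext (Nat.le_zero.mp ha)
    subst haz
    have hz : Ffun n (fun m => α (e m.castSucc) (e m.succ) (hmono _ _ (Fin.castSucc_lt_succ (i := m)).le))
        ((⟨0, Nat.succ_pos n⟩ : Fin (n + 1)) : ℕ) 0 = 0 := by
      rw [Ffun, Finset.Ico_eq_empty (by simp), Finset.sum_empty]
    rw [hz]
    exact hα.2.1 _ _
  | succ c ih =>
    intro hc a ha h
    rcases Nat.lt_or_ge (a : ℕ) (c + 1) with hlt | hge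
    · have hac : (a : ℕ) ≤ c := Nat.lt_succ_iff.mp hlt
      have hcn : c ≤ n := Nat.le_of_succ_le hc
      have hcn' : c < n := hc
      have h1 : r (e a) (e ⟨c, Nat.lt_succ_of_le hcn⟩) :=
        hmono _ _ (by rw [Fin.le_def]; exact hac)
      have h2 : r (e ⟨c, Nat.lt_succ_of_le hcn⟩) (e ⟨c + 1, Nat.lt_succ_of_le hc⟩) :=
        hmono _ _ (by rw [Fin.le_def]; exact Nat.le_succ c)
      rw [← hα.2.2 _ _ _ h1 h2 h, ih hcn a hac h1]
      rw [Ffun, Ffun, Finset.sum_Ico_succ_top hac]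
      congr 1
      show α _ _ h2 = Tfun n _ c
      rw [Tfun, dif_pos hcn']
      rfl
    · have haeq : (a : ℕ) = c + 1 := le_antisymm ha hge
      have haz : a = ⟨c + 1, Nat.lt_succ_of_le hc⟩ := Fin.ext haeq
      subst haz
      have : Ffun n (fun m => α (e m.castSucc) (e m.succ) (hmono _ _ (Fin.castSucc_lt_succ (i := m)).le))
          (c + 1) (c + 1) = 0 := by rw [Ffun, Finset.Ico_self, Finset.sum_empty]
      rw [this]
      exact hα.2.1 _ _

/-- If `r (e b) (e a)` with `a ≤ b`, the sum between them is a real number. -/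
private lemma freal_lemma {I : Type} {r : I → I → Prop}
    (htrans : ∀ i j k, r i j → r j k → r i k)
    {n : ℕ} {e : Fin (n + 1) → I}
    (hmono : ∀ m m' : Fin (n + 1), m ≤ m' → r (e m) (e m'))
    {t : Fin n → EReal} (hbot : ∀ m, t m ≠ ⊥)
    (htop : ∀ m : Fin n, r (e m.succ) (e m.castSucc) → t m ≠ ⊤)
    (a b : Fin (n + 1)) (hab : (a : ℕ) ≤ (b : ℕ)) (hba : r (e b) (e a)) :
    ∃ x : ℝ, Ffun n t (a : ℕ) (b : ℕ) = x := by
  apply ereal_sum_real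
  intro m hm
  simp only [Finset.mem_Ico] at hm
  have hmn : m < n := lt_of_lt_of_le hm.2 (Nat.lt_succ_iff.mp b.isLt)
  have h1 : r (e (⟨m, hmn⟩ : Fin n).succ) (e b) :=
    hmono _ _ (by rw [Fin.le_def]; simpa using hm.2)
  have h2 : r (e a) (e (⟨m, hmn⟩ : Fin n).castSucc) :=
    hmono _ _ (by rw [Fin.le_def]; simpa using hm.1)
  have hne_top := htop ⟨m, hmn⟩ (htrans _ _ _ (htrans _ _ _ h1 hba) h2)
  have hne_bot := hbot (⟨m, hmn⟩ : Fin n)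
  rw [Tfun, dif_pos hmn]
  revert hne_top hne_bot
  induction t (⟨m, hmn⟩ : Fin n) using EReal.rec with
  | bot => intro h1 h2; exact absurd rfl h2
  | top => intro h1 h2; exact absurd rfl h1
  | coe x => intro _ _; exact ⟨x, rfl⟩

private noncomputable def chainA {I : Type} (r : I → I → Prop) {n : ℕ} (e : Fin (n + 1) → I)
    (he : Function.Bijective e) (t : Fin n → EReal) : ∀ i j : I, r i j → EReal :=
  fun i j _ =>
    if ((Equiv.ofBijective e he).symm i : ℕ) ≤ ((Equiv.ofBijective e he).symm j : ℕ) then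
      Ffun n t ((Equiv.ofBijective e he).symm i : ℕ) ((Equiv.ofBijective e he).symm j : ℕ)
    else
      -Ffun n t ((Equiv.ofBijective e he).symm j : ℕ) ((Equiv.ofBijective e he).symm i : ℕ)

private lemma chainA_mem {I : Type} {r : I → I → Prop}
    (hrefl : ∀ i, r i i) (htrans : ∀ i j k, r i j → r j k → r i k)
    {n : ℕ} {e : Fin (n + 1) → I} (he : Function.Bijective e)
    (hmono : ∀ m m' : Fin (n + 1), m ≤ m' → r (e m) (e m'))
    {t : Fin n → EReal} (hbot : ∀ m, t m ≠ ⊥)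
    (htop : ∀ m : Fin n, r (e m.succ) (e m.castSucc) → t m ≠ ⊤) :
    chainA r e he t ∈ RepD r := by
  have key : ∀ i j : I, r i j →
      r (e ((Equiv.ofBijective e he).symm i)) (e ((Equiv.ofBijective e he).symm j)) := by
    intro i j h
    rwa [Equiv.ofBijective_apply_symm_apply e he, Equiv.ofBijective_apply_symm_apply e he]
  refine ⟨?_, ?_, ?_⟩
  · intro i j h
    unfold chainA
    split_ifs with hab
    · exact Ffun_ne_bot hbot _ _
    · obtain ⟨x, hx⟩ := freal_lemma htrans hmono hbot htop _ _ (le_of_not_ge hab) (key i j h)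
      rw [hx, ← EReal.coe_neg]
      exact EReal.coe_ne_bot _
  · intro i h
    unfold chainA
    rw [if_pos le_rfl, Ffun, Finset.Ico_self, Finset.sum_empty]
  · intro i j k hij hjk hik
    have hij' := key _ _ hij
    have hjk' := key _ _ hjk
    have hik' := key _ _ hik
    unfold chainA
    set a := (Equiv.ofBijective e he).symm i with ha
    set b := (Equiv.ofBijective e he).symm j with hb
    set c := (Equiv.ofBijective e he).symm k with hc
    rcases le_or_gt (a : ℕ) (b : ℕ) with hab | hba
    · rcases le_or_gt (b : ℕ) (c : ℕ) with hbc | hcb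
      · rw [if_pos hab, if_pos hbc, if_pos (hab.trans hbc)]
        exact Ffun_consec t hab hbc
      · rcases le_or_gt (a : ℕ) (c : ℕ) with hac | hca
        · rw [if_pos hab, if_neg (not_le.mpr hcb), if_pos hac]
          obtain ⟨y, hy⟩ := freal_lemma htrans hmono hbot htop c b hcb.le hjk'
          rw [← Ffun_consec t hac hcb.le, hy]
          exact ereal_add_coe_neg _ y
        · rw [if_pos hab, if_neg (not_le.mpr hcb), if_neg (not_le.mpr hca)]
          obtain ⟨x, hx⟩ := freal_lemma htrans hmono hbot htop c a hca.le hik'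
          obtain ⟨y, hy⟩ := freal_lemma htrans hmono hbot htop c b hcb.le hjk'
          have hsplit := Ffun_consec t (c := (b : ℕ)) hca.le hab
          rw [hx, hy] at hsplit
          have hz := ereal_real_add_eq_real (Ffun_ne_bot hbot _ _) hsplit
          rw [hz, hy, hx]
          norm_cast
          ring
    · rcases le_or_gt (a : ℕ) (c : ℕ) with hac | hca
      · rw [if_neg (not_le.mpr hba), if_pos (hba.le.trans hac), if_pos hac]
        obtain ⟨x, hx⟩ := freal_lemma htrans hmono hbot htop b a hba.le hij'
        rw [← Ffun_consec t hba.le hac, hx]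
        exact ereal_neg_coe_add _ x
      · rcases le_or_gt (b : ℕ) (c : ℕ) with hbc | hcb
        · rw [if_neg (not_le.mpr hba), if_pos hbc, if_neg (not_le.mpr hca)]
          obtain ⟨x, hx⟩ := freal_lemma htrans hmono hbot htop b a hba.le hij'
          obtain ⟨y, hy⟩ := freal_lemma htrans hmono hbot htop c a hca.le hik'
          have hsplit := Ffun_consec t (a := (b : ℕ)) hbc hca.le
          rw [hy, hx, add_comm] at hsplit
          have hz := ereal_real_add_eq_real (Ffun_ne_bot hbot _ _) hsplit
          rw [hx, hz, hy]
          norm_cast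
          ring
        · rw [if_neg (not_le.mpr hba), if_neg (not_le.mpr hcb),
            if_neg (not_le.mpr (hcb.trans hba))]
          obtain ⟨x, hx⟩ := freal_lemma htrans hmono hbot htop b a hba.le hij'
          obtain ⟨y, hy⟩ := freal_lemma htrans hmono hbot htop c b hcb.le hjk'
          rw [← Ffun_consec t hcb.le hba.le, hx, hy]
          norm_cast
          ring

private lemma chainA_tup {I : Type} (r : I → I → Prop)
    {n : ℕ} {e : Fin (n + 1) → I} (he : Function.Bijective e)
    (hmono : ∀ m m' : Fin (n + 1), m ≤ m' → r (e m) (e m'))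
    (t : Fin n → EReal) (m : Fin n) :
    chainA r e he t (e m.castSucc) (e m.succ) (hmono _ _ (Fin.castSucc_lt_succ (i := m)).le) = t m := by
  have hinv : ∀ x, (Equiv.ofBijective e he).symm (e x) = x :=
    fun x => Equiv.ofBijective_symm_apply_apply e he x
  unfold chainA
  rw [hinv, hinv]
  have h1 : (m.castSucc : ℕ) = (m : ℕ) := rfl
  have h2 : (m.succ : ℕ) = (m : ℕ) + 1 := rfl
  rw [h1, h2, if_pos (Nat.le_succ _), Ffun, Finset.sum_Ico_succ_top (le_refl _),
    Finset.Ico_self, Finset.sum_empty, zero_add, Tfun, dif_pos m.isLt, Fin.eta]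

private lemma chainA_desc {I : Type} {r : I → I → Prop}
    (hrefl : ∀ i, r i i) (htrans : ∀ i j k, r i j → r j k → r i k)
    {n : ℕ} {e : Fin (n + 1) → I} (he : Function.Bijective e)
    (hmono : ∀ m m' : Fin (n + 1), m ≤ m' → r (e m) (e m'))
    {α : ∀ i j : I, r i j → EReal} (hα : α ∈ RepD r) :
    α = chainA r e he
      (fun m => α (e m.castSucc) (e m.succ) (hmono _ _ (Fin.castSucc_lt_succ (i := m)).le)) := by
  have hinv : ∀ x, (Equiv.ofBijective e he).symm (e x) = x :=
    fun x => Equiv.ofBijective_symm_apply_apply e he x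
  funext i j h
  obtain ⟨a, rfl⟩ : ∃ a, i = e a := ⟨_, (Equiv.ofBijective_apply_symm_apply e he i).symm⟩
  obtain ⟨b, rfl⟩ : ∃ b, j = e b := ⟨_, (Equiv.ofBijective_apply_symm_apply e he j).symm⟩
  unfold chainA
  rw [hinv, hinv]
  rcases le_or_gt (a : ℕ) (b : ℕ) with hab | hba
  · rw [if_pos hab]
    exact chain_lemma hmono hα (b : ℕ) (Nat.lt_succ_iff.mp b.isLt) a hab h
  · rw [if_neg (not_le.mpr hba)]
    have hba' : r (e b) (e a) := hmono _ _ (by rw [Fin.le_def]; exact hba.le)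
    have heq : α (e a) (e b) h + α (e b) (e a) hba' = 0 := by
      rw [hα.2.2 _ _ _ h hba' (htrans _ _ _ h hba')]
      exact hα.2.1 _ _
    obtain ⟨x, y, hx, hy, hxy⟩ := ereal_zero_sum (hα.1 _ _ _) (hα.1 _ _ _) heq
    have hcb : α (e b) (e a) hba'
        = Ffun n (fun m => α (e m.castSucc) (e m.succ) (hmono _ _ (Fin.castSucc_lt_succ (i := m)).le))
            (b : ℕ) (a : ℕ) :=
      chain_lemma hmono hα (a : ℕ) (Nat.lt_succ_iff.mp a.isLt) b hba.le hba'
    rw [hx, ← hcb, hy, ← EReal.coe_neg]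
    exact_mod_cast (by linarith : x = -y)

theorem repD_chain_injection {I : Type} [Fintype I] [Nonempty I] (r : I → I → Prop)
    (hrefl : ∀ i, r i i)
    (htrans : ∀ i j k, r i j → r j k → r i k)
    (htot : ∀ i j, r i j ∨ r j i)
    (n : ℕ) (e : Fin (n + 1) → I) (he : Function.Bijective e)
    (hmono : ∀ m m' : Fin (n + 1), m ≤ m' → r (e m) (e m')) :
    Set.InjOn
      (fun (α : ∀ i j : I, r i j → EReal) (m : Fin n) =>
        α (e m.castSucc) (e m.succ) (hmono _ _ (Fin.castSucc_lt_succ (i := m)).le))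
      (RepD r) ∧
    (fun (α : ∀ i j : I, r i j → EReal) (m : Fin n) =>
        α (e m.castSucc) (e m.succ) (hmono _ _ (Fin.castSucc_lt_succ (i := m)).le)) '' (RepD r)
      = {t : Fin n → EReal |
          (∀ m : Fin n, t m ≠ ⊥) ∧ ∀ m : Fin n, r (e m.succ) (e m.castSucc) → t m ≠ ⊤} := by
  constructor
  · intro α₁ h1 α₂ h2 heq
    rw [chainA_desc hrefl htrans he hmono h1, chainA_desc hrefl htrans he hmono h2]
    exact congrArg _ heq
  · ext t
    simp only [Set.mem_image, Set.mem_setOf_eq]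
    constructor
    · rintro ⟨α, hα, rfl⟩
      refine ⟨fun m => hα.1 _ _ _, fun m hr => ?_⟩
      have heq : α (e m.castSucc) (e m.succ) (hmono _ _ (Fin.castSucc_lt_succ (i := m)).le)
          + α (e m.succ) (e m.castSucc) hr = 0 := by
        rw [hα.2.2 _ _ _ _ hr (hrefl _)]
        exact hα.2.1 _ _
      obtain ⟨x, y, hx, hy, hxy⟩ := ereal_zero_sum (hα.1 _ _ _) (hα.1 _ _ _) heq
      simp only []
      rw [hx]
      exact EReal.coe_ne_top x
    · rintro ⟨hbot, htop⟩
      exact ⟨chainA r e he t, chainA_mem hrefl htrans he hmono hbot htop,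
        funext fun m => chainA_tup r he hmono t m⟩
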